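/- Let N be a positive integer, M ∈ Matrix (Fin N) (Fin N) ℝ symmetric positive definite, and ρ ∈ ℝ^N. Let p : ℝ^N → ℝ be the Gaussian density with mean M ρ and covariance M, i.e., p(u) = ((2π)^N det M)^{-1/2} exp(−(1/2)⟨u − Mρ, M⁻¹(u − Mρ)⟩), with respect to Lebesgue measure on the Euclidean space ℝ^N. Let g : ℝ^N → ℝ^N be continuously differentiable with compact support. Then ∫ ⟨g(u), ρ⟩ p(u) du = ∫ ⟨g(u), M⁻¹ u⟩ p(u) du − ∫ (div g)(u) p(u) du. -/

import Mathlib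

open MeasureTheory Matrix

/-- The divergence of a map `g : ℝ^N → ℝ^N` at `u`: the trace of the Fréchet derivative. -/
noncomputable def divergence {N : ℕ} (g : (Fin N → ℝ) → (Fin N → ℝ)) (u : Fin N → ℝ) : ℝ :=
  LinearMap.trace ℝ (Fin N → ℝ) (fderiv ℝ g u).toLinearMap

/-- The Gaussian density on `ℝ^N` with mean `M ρ` and covariance `M`, with respect to
Lebesgue measure:
`p(u) = ((2π)^N det M)^{-1/2} exp(−(1/2)⟨u − Mρ, M⁻¹(u − Mρ)⟩)`. -/
noncomputable def gaussDensity {N : ℕ} (M : Matrix (Fin N) (Fin N) ℝ) (ρ : Fin N → ℝ)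
    (u : Fin N → ℝ) : ℝ :=
  ((2 * Real.pi) ^ N * M.det) ^ (-(1 : ℝ) / 2) *
    Real.exp (-(1 / 2) * ((u - M.mulVec ρ) ⬝ᵥ (M⁻¹.mulVec (u - M.mulVec ρ))))

noncomputable def quadCLM {N : ℕ} (A : Matrix (Fin N) (Fin N) ℝ) :
    (Fin N → ℝ) →L[ℝ] (Fin N → ℝ) →L[ℝ] ℝ :=
  LinearMap.toContinuousLinearMap
    { toFun := fun x => LinearMap.toContinuousLinearMap
        { toFun := fun y => x ⬝ᵥ A.mulVec y
          map_add' := fun y z => by simp [Matrix.mulVec_add, dotProduct_add]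
          map_smul' := fun c y => by simp [Matrix.mulVec_smul] }
      map_add' := fun x z => by ext y; simp [add_dotProduct]
      map_smul' := fun c x => by ext y; simp [smul_dotProduct] }

@[simp] lemma quadCLM_apply {N : ℕ} (A : Matrix (Fin N) (Fin N) ℝ) (x y : Fin N → ℝ) :
    quadCLM A x y = x ⬝ᵥ A.mulVec y := rfl

lemma symm_dot {N : ℕ} (A : Matrix (Fin N) (Fin N) ℝ) (hA : Aᵀ = A) (v w : Fin N → ℝ) :
    v ⬝ᵥ A.mulVec w = w ⬝ᵥ A.mulVec v := by
  rw [dotProduct_mulVec, ← Matrix.mulVec_transpose, hA, dotProduct_comm]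

lemma gauss_hasFDerivAt {N : ℕ} (c : ℝ) (A : Matrix (Fin N) (Fin N) ℝ) (hA : Aᵀ = A)
    (m u : Fin N → ℝ) :
    HasFDerivAt (fun u => c * Real.exp (-(1/2) * ((u - m) ⬝ᵥ A.mulVec (u - m))))
      ((-(c * Real.exp (-(1/2) * ((u - m) ⬝ᵥ A.mulVec (u - m))))) • quadCLM A (u - m)) u := by
  have h1 : HasFDerivAt (fun u : Fin N → ℝ => (u - m, u - m))
      ((ContinuousLinearMap.id ℝ (Fin N → ℝ)).prod (ContinuousLinearMap.id ℝ (Fin N → ℝ))) u :=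
    ((hasFDerivAt_id u).sub_const m).prodMk ((hasFDerivAt_id u).sub_const m)
  have h2 := ((quadCLM A).isBoundedBilinearMap.hasFDerivAt (u - m, u - m)).comp u h1
  have h3 := (((h2.const_mul (-(1/2))).exp).const_mul c)
  refine h3.congr_fderiv ?_
  ext v
  simp [IsBoundedBilinearMap.deriv_apply, symm_dot A hA v (u - m)]
  ring

lemma divergence_eq_sum {N : ℕ} (g : (Fin N → ℝ) → (Fin N → ℝ)) (u : Fin N → ℝ) :
    divergence g u = ∑ i, fderiv ℝ g u (Pi.single i 1) i := by
  rw [divergence, LinearMap.trace_eq_matrix_trace ℝ (Pi.basisFun ℝ (Fin N)), Matrix.trace]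
  simp [Matrix.diag, LinearMap.toMatrix_apply]

lemma fderiv_coord {N : ℕ} {g : (Fin N → ℝ) → (Fin N → ℝ)} (hg : Differentiable ℝ g)
    (i : Fin N) (u v : Fin N → ℝ) :
    fderiv ℝ (fun u => g u i) u v = fderiv ℝ g u v i := by
  have h := ((ContinuousLinearMap.proj (R := ℝ) (φ := fun _ : Fin N => ℝ) i).hasFDerivAt.comp u
    (hg u).hasFDerivAt)
  have h2 : HasFDerivAt (fun u => g u i) ((ContinuousLinearMap.proj i).comp (fderiv ℝ g u)) u := h
  rw [h2.fderiv]; rfl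

theorem generalized_stein_identity
    {N : ℕ} (hN : 0 < N)
    (M : Matrix (Fin N) (Fin N) ℝ) (hM : M.PosDef)
    (ρ : Fin N → ℝ)
    (g : (Fin N → ℝ) → (Fin N → ℝ))
    (hg : ContDiff ℝ 1 g) (hgsupp : HasCompactSupport g) :
    ∫ u, (g u ⬝ᵥ ρ) * gaussDensity M ρ u
      = (∫ u, (g u ⬝ᵥ M⁻¹.mulVec u) * gaussDensity M ρ u)
        - ∫ u, divergence g u * gaussDensity M ρ u := by
  set p := gaussDensity M ρ with hp_def
  set A := M⁻¹ with hA_def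
  set m := M.mulVec ρ with hm_def
  set c : ℝ := ((2 * Real.pi) ^ N * M.det) ^ (-(1 : ℝ) / 2) with hc_def
  -- symmetry of A
  have hA : Aᵀ = A := by
    have := hM.1.inv.eq
    simpa [Matrix.conjTranspose_eq_transpose_of_trivial] using this
  -- derivative of p
  have hp : ∀ u, HasFDerivAt p ((-(p u)) • quadCLM A (u - m)) u := fun u =>
    gauss_hasFDerivAt c A hA m u
  have hpdiff : Differentiable ℝ p := fun u => (hp u).differentiableAt
  have hpc : Continuous p := hpdiff.continuous
  have hpf : ∀ u v, fderiv ℝ p u v = -((u - m) ⬝ᵥ A.mulVec v) * p u := by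
    intro u v
    rw [(hp u).fderiv]
    simp [mul_comm]
    ring
  have hgd : Differentiable ℝ g := hg.differentiable one_ne_zero
  have hgc : Continuous g := hgd.continuous
  have hgdc : Continuous (fun u => fderiv ℝ g u) := hg.continuous_fderiv one_ne_zero
  have hfd0 : ∀ x ∉ tsupport g, fderiv ℝ g x = 0 := fun x hx => by
    by_contra h
    exact hx (support_fderiv_subset ℝ (by simpa [Function.mem_support] using h))
  have hg0 : ∀ x ∉ tsupport g, g x = 0 := fun x hx => image_eq_zero_of_notMem_tsupport hx
  -- continuity of u ↦ fderiv g u v i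
  have hcont_fd : ∀ (v : Fin N → ℝ) (i : Fin N), Continuous (fun u => fderiv ℝ g u v i) :=
    fun v i => (continuous_apply i).comp
      ((ContinuousLinearMap.apply ℝ (Fin N → ℝ) v).continuous.comp hgdc)
  -- continuity of dot products with continuous vector field
  have hAcont : Continuous (fun u : Fin N → ℝ => A.mulVec u) :=
    (LinearMap.toContinuousLinearMap A.mulVecLin).continuous
  -- generic integrability
  have hint : ∀ (F : (Fin N → ℝ) → ℝ), Continuous F → (∀ x ∉ tsupport g, F x = 0) →
      Integrable (fun u => F u * p u) := by
    intro F hF h0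
    exact ((hF.mul hpc).integrable_of_hasCompactSupport
      (HasCompactSupport.intro hgsupp (fun x hx => by rw [Pi.mul_apply, h0 x hx, zero_mul])))
  -- key integrabilities
  have int1 : ∀ i : Fin N, Integrable (fun u => fderiv ℝ g u (Pi.single i 1) i * p u) :=
    fun i => hint _ (hcont_fd _ i) (fun x hx => by rw [hfd0 x hx]; simp)
  have int2 : ∀ i : Fin N, Integrable (fun u => g u i * (((u - m) ⬝ᵥ A.mulVec (Pi.single i 1)) * p u)) := by
    intro i
    have : Continuous (fun u : Fin N → ℝ => g u i * ((u - m) ⬝ᵥ A.mulVec (Pi.single i 1))) := by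
      apply ((continuous_apply i).comp hgc).mul
      exact (continuous_id.sub continuous_const).dotProduct continuous_const
    have h := hint _ this (fun x hx => by rw [hg0 x hx]; simp)
    simpa [mul_assoc] using h
  have int3 : ∀ i : Fin N, Integrable (fun u => g u i * p u) :=
    fun i => hint _ ((continuous_apply i).comp hgc) (fun x hx => by rw [hg0 x hx]; simp)
  have intρ : Integrable (fun u => (g u ⬝ᵥ ρ) * p u) :=
    hint _ (hgc.dotProduct continuous_const) (fun x hx => by rw [hg0 x hx]; simp)
  have intAu : Integrable (fun u => (g u ⬝ᵥ A.mulVec u) * p u) :=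
    hint _ (hgc.dotProduct (hAcont.comp continuous_id)) (fun x hx => by rw [hg0 x hx]; simp)
  -- integration by parts in each coordinate
  have ibp : ∀ i : Fin N,
      ∫ u, fderiv ℝ g u (Pi.single i 1) i * p u
        = ∫ u, g u i * (((u - m) ⬝ᵥ A.mulVec (Pi.single i 1)) * p u) := by
    intro i
    have hfc : Differentiable ℝ (fun u => g u i) := differentiable_pi.1 hgd i
    have e1 : ∀ u, fderiv ℝ (fun u => g u i) u (Pi.single i 1) = fderiv ℝ g u (Pi.single i 1) i :=
      fun u => fderiv_coord hgd i u _
    have e2 : ∀ u, fderiv ℝ p u (Pi.single i 1)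
        = -((u - m) ⬝ᵥ A.mulVec (Pi.single i 1)) * p u := fun u => hpf u _
    have h := integral_mul_fderiv_eq_neg_fderiv_mul_of_integrable
      (f := fun u => g u i) (g := p) (v := Pi.single i 1) (μ := volume)
      ?_ ?_ (int3 i) (fun x _ => hfc x) (fun x _ => hpdiff x)
    · calc ∫ u, fderiv ℝ g u (Pi.single i 1) i * p u
          = ∫ u, fderiv ℝ (fun u => g u i) u (Pi.single i 1) * p u := by
            simp_rw [e1]
        _ = - ∫ u, g u i * fderiv ℝ p u (Pi.single i 1) := by rw [h]; ring_nf
        _ = ∫ u, g u i * (((u - m) ⬝ᵥ A.mulVec (Pi.single i 1)) * p u) := by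
            rw [← integral_neg]
            congr 1
            ext u
            rw [e2 u]
            ring
    · simp_rw [e1]; exact int1 i
    · simp_rw [e2]
      have := int2 i
      apply this.neg'.congr
      filter_upwards with u
      ring
  -- sum up
  have key : ∫ u, divergence g u * p u
      = ∫ u, (g u ⬝ᵥ A.mulVec (u - m)) * p u := by
    calc ∫ u, divergence g u * p u
        = ∫ u, ∑ i, fderiv ℝ g u (Pi.single i 1) i * p u := by
          congr 1; ext u; rw [divergence_eq_sum, Finset.sum_mul]
      _ = ∑ i, ∫ u, fderiv ℝ g u (Pi.single i 1) i * p u :=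
          integral_finset_sum _ (fun i _ => int1 i)
      _ = ∑ i, ∫ u, g u i * (((u - m) ⬝ᵥ A.mulVec (Pi.single i 1)) * p u) := by
          exact Finset.sum_congr rfl (fun i _ => ibp i)
      _ = ∫ u, ∑ i, g u i * (((u - m) ⬝ᵥ A.mulVec (Pi.single i 1)) * p u) :=
          (integral_finset_sum _ (fun i _ => int2 i)).symm
      _ = ∫ u, (g u ⬝ᵥ A.mulVec (u - m)) * p u := by
          congr 1; ext u
          simp_rw [symm_dot A hA (u - m), single_dotProduct, one_mul]
          simp [dotProduct, Finset.sum_mul, mul_assoc]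
  -- A *ᵥ m = ρ
  have hAm : A.mulVec m = ρ := by
    rw [hm_def, hA_def, Matrix.mulVec_mulVec,
      Matrix.nonsing_inv_mul M (isUnit_iff_ne_zero.mpr hM.det_pos.ne'), Matrix.one_mulVec]
  have key2 : ∫ u, divergence g u * p u
      = (∫ u, (g u ⬝ᵥ A.mulVec u) * p u) - ∫ u, (g u ⬝ᵥ ρ) * p u := by
    rw [key, ← integral_sub intAu intρ]
    congr 1; ext u
    rw [Matrix.mulVec_sub, hAm, dotProduct_sub]
    ring
  rw [key2]
  ring
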